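/- Let K be a compact convex set and Δ a compact convex set satisfying the Riesz decomposition property for proper convex combinations (i.e., a Choquet simplex, via characterization (iii)). Suppose there exist affine (not necessarily continuous) maps φ : Δ → K and λ : K → Δ with φ ∘ λ = id_K. Then K also satisfies the Riesz decomposition property for proper convex combinations. -/

import Mathlib

/-- The Riesz decomposition property for proper convex combinations in a convex
subset `K` of a real vector space. -/
def HasRieszDecomp {E : Type*} [AddCommGroup E] [Module ℝ E] (K : Set E) : Prop :=
  ∀ (n m : ℕ) (α : Fin n → ℝ) (β : Fin m → ℝ) (x : Fin n → E) (y : Fin m → E),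
    (∀ j, 0 < α j) → (∀ i, 0 < β i) → ∑ j, α j = 1 → ∑ i, β i = 1 →
    (∀ j, x j ∈ K) → (∀ i, y i ∈ K) →
    ∑ j, α j • x j = ∑ i, β i • y i →
    ∃ (γ : Fin m → Fin n → ℝ) (z : Fin m → Fin n → E),
      (∀ i j, 0 ≤ γ i j) ∧ (∀ i j, z i j ∈ K) ∧
      (∑ j, α j • x j) = ∑ i, ∑ j, γ i j • z i j ∧
      (∀ j, α j = ∑ i, γ i j) ∧ (∀ i, β i = ∑ j, γ i j) ∧
      (∀ j, x j = ∑ i, ((α j)⁻¹ * γ i j) • z i j) ∧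
      (∀ i, y i = ∑ j, ((β i)⁻¹ * γ i j) • z i j)

/-- If `Δ` is a Choquet simplex (has the Riesz decomposition property for proper
convex combinations) and there exist affine (not necessarily continuous) maps
`f : Δ → K` and `g : K → Δ` with `f ∘ g = id` on `K`, then `K` has the Riesz
decomposition property as well. -/

lemma affine_map_sum {ι E F : Type*} [AddCommGroup E] [Module ℝ E]
    [AddCommGroup F] [Module ℝ F]
    (S : Set F) (hS : Convex ℝ S) (f : F → E)
    (hf : ∀ a ∈ S, ∀ b ∈ S, ∀ t : ℝ, 0 ≤ t → t ≤ 1 →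
      f ((1 - t) • a + t • b) = (1 - t) • f a + t • f b)
    (s : Finset ι) (w : ι → ℝ) (p : ι → F)
    (hw : ∀ i ∈ s, 0 ≤ w i) (hw1 : ∑ i ∈ s, w i = 1) (hp : ∀ i ∈ s, p i ∈ S) :
    f (∑ i ∈ s, w i • p i) = ∑ i ∈ s, w i • f (p i) := by
  classical
  induction s using Finset.induction_on generalizing w with
  | empty => simp at hw1
  | @insert a s ha ih =>
    rw [Finset.sum_insert ha, Finset.sum_insert ha] at *
    set t := w a with ht
    have ht0 : 0 ≤ t := hw a (Finset.mem_insert_self a s)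
    have hws : ∀ i ∈ s, 0 ≤ w i := fun i hi => hw i (Finset.mem_insert_of_mem hi)
    have hps : ∀ i ∈ s, p i ∈ S := fun i hi => hp i (Finset.mem_insert_of_mem hi)
    have hsum : ∑ i ∈ s, w i = 1 - t := by linarith
    have ht1 : t ≤ 1 := by
      have : 0 ≤ ∑ i ∈ s, w i := Finset.sum_nonneg hws
      linarith
    rcases eq_or_lt_of_le ht1 with h1 | h1
    · -- t = 1, all other weights zero
      have hz : ∀ i ∈ s, w i = 0 := by
        intro i hi
        have h0 : ∑ i ∈ s, w i = 0 := by linarith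
        exact (Finset.sum_eq_zero_iff_of_nonneg hws).mp h0 i hi
      have e1 : ∑ i ∈ s, w i • p i = 0 := Finset.sum_eq_zero fun i hi => by rw [hz i hi, zero_smul]
      have e2 : ∑ i ∈ s, w i • f (p i) = 0 := Finset.sum_eq_zero fun i hi => by rw [hz i hi, zero_smul]
      rw [e1, e2, h1, add_zero, add_zero, one_smul, one_smul]
    · -- t < 1
      set w' : ι → ℝ := fun i => w i / (1 - t) with hw'
      have h1t : 0 < 1 - t := by linarith
      have hw'0 : ∀ i ∈ s, 0 ≤ w' i := fun i hi => div_nonneg (hws i hi) h1t.le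
      have hw'1 : ∑ i ∈ s, w' i = 1 := by
        rw [hw']
        rw [← Finset.sum_div, hsum, div_self h1t.ne']
      have hq : ∑ i ∈ s, w' i • p i ∈ S := hS.sum_mem hw'0 hw'1 hps
      have key : ∑ i ∈ s, w i • p i = (1 - t) • ∑ i ∈ s, w' i • p i := by
        rw [Finset.smul_sum]
        refine Finset.sum_congr rfl fun i hi => ?_
        rw [hw', smul_smul, mul_div_cancel₀ _ h1t.ne']
      have key2 : t • p a + ∑ i ∈ s, w i • p i
          = (1 - t) • (∑ i ∈ s, w' i • p i) + t • p a := by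
        rw [key]; abel
      rw [key2, hf _ hq _ (hp a (Finset.mem_insert_self a s)) t ht0 ht1,
        ih w' hw'0 hw'1 hps]
      rw [Finset.smul_sum]
      have : ∑ i ∈ s, (1 - t) • (w' i • f (p i)) = ∑ i ∈ s, w i • f (p i) := by
        refine Finset.sum_congr rfl fun i hi => ?_
        rw [hw', smul_smul, mul_div_cancel₀ _ h1t.ne']
      rw [this]; abel

theorem riesz_decomposition_of_affine_retract
    {E F : Type*} [AddCommGroup E] [Module ℝ E] [TopologicalSpace E]
    [IsTopologicalAddGroup E] [ContinuousSMul ℝ E] [LocallyConvexSpace ℝ E]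
    [AddCommGroup F] [Module ℝ F] [TopologicalSpace F]
    [IsTopologicalAddGroup F] [ContinuousSMul ℝ F] [LocallyConvexSpace ℝ F]
    (K : Set E) (hKc : IsCompact K) (hKconv : Convex ℝ K)
    (Δ : Set F) (hΔc : IsCompact Δ) (hΔconv : Convex ℝ Δ)
    (f : F → E) (g : E → F)
    (hf : ∀ x ∈ Δ, f x ∈ K) (hg : ∀ x ∈ K, g x ∈ Δ)
    (hfaff : ∀ a ∈ Δ, ∀ b ∈ Δ, ∀ t : ℝ, 0 ≤ t → t ≤ 1 →
      f ((1 - t) • a + t • b) = (1 - t) • f a + t • f b)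
    (hgaff : ∀ a ∈ K, ∀ b ∈ K, ∀ t : ℝ, 0 ≤ t → t ≤ 1 →
      g ((1 - t) • a + t • b) = (1 - t) • g a + t • g b)
    (hfg : ∀ x ∈ K, f (g x) = x)
    (hΔ : HasRieszDecomp Δ) :
    HasRieszDecomp K := by
  intro n m α β x y hα hβ hα1 hβ1 hx hy hsum
  have hgx : ∀ j, g (x j) ∈ Δ := fun j => hg _ (hx j)
  have hgy : ∀ i, g (y i) ∈ Δ := fun i => hg _ (hy i)
  have hgsx : g (∑ j, α j • x j) = ∑ j, α j • g (x j) :=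
    affine_map_sum K hKconv g hgaff Finset.univ α x (fun j _ => (hα j).le) hα1
      (fun j _ => hx j)
  have hgsy : g (∑ i, β i • y i) = ∑ i, β i • g (y i) :=
    affine_map_sum K hKconv g hgaff Finset.univ β y (fun i _ => (hβ i).le) hβ1
      (fun i _ => hy i)
  have hsum' : ∑ j, α j • g (x j) = ∑ i, β i • g (y i) := by
    rw [← hgsx, ← hgsy, hsum]
  obtain ⟨γ, z', hγ0, hz'Δ, htot, hαγ, hβγ, hxz, hyz⟩ :=
    hΔ n m α β (fun j => g (x j)) (fun i => g (y i)) hα hβ hα1 hβ1 hgx hgy hsum'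
  refine ⟨γ, fun i j => f (z' i j), hγ0, fun i j => hf _ (hz'Δ i j), ?_, hαγ, hβγ, ?_, ?_⟩
  · -- main sum
    have happ := congrArg f htot
    have hL : f (∑ j, α j • g (x j)) = ∑ j, α j • x j := by
      rw [affine_map_sum Δ hΔconv f hfaff Finset.univ α (fun j => g (x j))
        (fun j _ => (hα j).le) hα1 (fun j _ => hgx j)]
      exact Finset.sum_congr rfl fun j _ => by rw [hfg _ (hx j)]
    have hflat : (∑ i, ∑ j, γ i j • z' i j)
        = ∑ p : Fin m × Fin n, γ p.1 p.2 • z' p.1 p.2 := by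
      rw [Fintype.sum_prod_type]
    have hw1 : ∑ p : Fin m × Fin n, γ p.1 p.2 = 1 := by
      rw [Fintype.sum_prod_type]
      calc ∑ i, ∑ j, γ i j = ∑ i, β i := Finset.sum_congr rfl fun i _ => (hβγ i).symm
        _ = 1 := hβ1
    have hR : f (∑ i, ∑ j, γ i j • z' i j) = ∑ i, ∑ j, γ i j • f (z' i j) := by
      rw [hflat, affine_map_sum Δ hΔconv f hfaff Finset.univ
        (fun p : Fin m × Fin n => γ p.1 p.2) (fun p => z' p.1 p.2)
        (fun p _ => hγ0 p.1 p.2) hw1 (fun p _ => hz'Δ p.1 p.2),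
        Fintype.sum_prod_type]
    rw [← hL, ← hR, htot]
  · -- x j
    intro j
    have happ := congrArg f (hxz j)
    have hw1 : ∑ i, (α j)⁻¹ * γ i j = 1 := by
      rw [← Finset.mul_sum, ← hαγ j, inv_mul_cancel₀ (hα j).ne']
    have hR : f (∑ i, ((α j)⁻¹ * γ i j) • z' i j)
        = ∑ i, ((α j)⁻¹ * γ i j) • f (z' i j) :=
      affine_map_sum Δ hΔconv f hfaff Finset.univ _ (fun i => z' i j)
        (fun i _ => mul_nonneg (inv_nonneg.mpr (hα j).le) (hγ0 i j)) hw1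
        (fun i _ => hz'Δ i j)
    rw [hfg _ (hx j)] at happ
    rw [happ, hR]
  · -- y i
    intro i
    have happ := congrArg f (hyz i)
    have hw1 : ∑ j, (β i)⁻¹ * γ i j = 1 := by
      rw [← Finset.mul_sum, ← hβγ i, inv_mul_cancel₀ (hβ i).ne']
    have hR : f (∑ j, ((β i)⁻¹ * γ i j) • z' i j)
        = ∑ j, ((β i)⁻¹ * γ i j) • f (z' i j) :=
      affine_map_sum Δ hΔconv f hfaff Finset.univ _ (fun j => z' i j)
        (fun j _ => mul_nonneg (inv_nonneg.mpr (hβ i).le) (hγ0 i j)) hw1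
        (fun j _ => hz'Δ i j)
    rw [hfg _ (hy i)] at happ
    rw [happ, hR]
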